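/- arXiv:2509.01936 — 2 statements merged into one kernel-verified Lean document; each statement's English description precedes it below -/
import Mathlib

section
/- Quantile property: let (θ̂, β̂, ξ̂, ξ̂*) be an optimal solution of the convex quantile regression problem minimizing (1/2)Σ_i‖β_i‖² + CΣ_i(τξ_i + (1−τ)ξ*_i) subject to y_i − θ_i ≤ (1−τ)ε + ξ_i, θ_i − y_i ≤ τε + ξ*_i, convexity constraints θ_i + ⟨β_i, x_j − x_i⟩ ≤ θ_j, and ξ, ξ* ≥ 0. Let n₋ = #{i : ξ̂*_i > 0} and n₊ = #{i : ξ̂_i > 0}. By KKT/dual feasibility, the dual multipliers λ_i ∈ [0, τC] of the first constraint and λ*_i ∈ [0, (1−τ)C] of the second satisfy complementary slackness with λ_i = τC when ξ̂_i > 0 and λ*_i = (1−τ)C when ξ̂*_i > 0, and Σ_i λ_i = Σ_i λ*_i (summing the stationarity conditions −λ_i + λ*_i + Σ_j μ_{ij} − Σ_j μ_{ji} = 0 over i with μ ≥ 0). Conclude n₋/n ≤ τ and n₊/n ≤ 1 − τ. -/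
theorem quantile_property
    (n : ℕ) (hn : 0 < n) (τ C : ℝ) (hτ : τ ∈ Set.Ioo (0:ℝ) 1) (hC : 0 < C)
    (ξ ξs lam lams : Fin n → ℝ) (μ : Fin n → Fin n → ℝ)
    -- dual feasibility
    (hlam : ∀ i, 0 ≤ lam i ∧ lam i ≤ τ * C)
    (hlams : ∀ i, 0 ≤ lams i ∧ lams i ≤ (1 - τ) * C)
    (hμ : ∀ i j, 0 ≤ μ i j)
    -- stationarity
    (hstat : ∀ i, -lam i + lams i + (∑ j, μ i j) - (∑ j, μ j i) = 0)
    -- complementary slackness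
    (hcs1 : ∀ i, 0 < ξ i → lam i = τ * C)
    (hcs2 : ∀ i, 0 < ξs i → lams i = (1 - τ) * C)
    (hcomp : ∀ i, lam i * lams i = 0) :
    ((Finset.univ.filter (fun i : Fin n => 0 < ξs i)).card : ℝ) / n ≤ τ ∧
    ((Finset.univ.filter (fun i : Fin n => 0 < ξ i)).card : ℝ) / n ≤ 1 - τ := by
  obtain ⟨hτ0, hτ1⟩ := hτ
  -- sum equality
  have hsum : ∑ i, lam i = ∑ i, lams i := by
    have h2 : ∑ i, (-lam i + lams i + (∑ j, μ i j) - (∑ j, μ j i)) = 0 := by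
      rw [Finset.sum_congr rfl (fun i _ => hstat i)]; simp
    have h3 : (∑ i, ∑ j, μ i j) = ∑ i, ∑ j, μ j i := Finset.sum_comm
    have := h2
    simp only [Finset.sum_sub_distrib, Finset.sum_add_distrib, Finset.sum_neg_distrib] at this
    linarith
  set S := Finset.univ.filter (fun i : Fin n => 0 < ξ i) with hS
  set T := Finset.univ.filter (fun i : Fin n => 0 < ξs i) with hT
  -- key bounds
  have hlow1 : (S.card : ℝ) * (τ * C) ≤ ∑ i, lam i := by
    calc (S.card : ℝ) * (τ * C) = ∑ _i ∈ S, τ * C := by rw [Finset.sum_const, nsmul_eq_mul]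
    _ = ∑ i ∈ S, lam i := Finset.sum_congr rfl (fun i hi => (hcs1 i (Finset.mem_filter.mp hi).2).symm)
    _ ≤ ∑ i, lam i := Finset.sum_le_sum_of_subset_of_nonneg (Finset.subset_univ S) (fun i _ _ => (hlam i).1)
  have hlow2 : (T.card : ℝ) * ((1 - τ) * C) ≤ ∑ i, lams i := by
    calc (T.card : ℝ) * ((1 - τ) * C) = ∑ _i ∈ T, (1 - τ) * C := by rw [Finset.sum_const, nsmul_eq_mul]
    _ = ∑ i ∈ T, lams i := Finset.sum_congr rfl (fun i hi => (hcs2 i (Finset.mem_filter.mp hi).2).symm)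
    _ ≤ ∑ i, lams i := Finset.sum_le_sum_of_subset_of_nonneg (Finset.subset_univ T) (fun i _ _ => (hlams i).1)
  have hup1 : ∑ i, lams i ≤ ((n : ℝ) - S.card) * ((1 - τ) * C) := by
    have : ∑ i, lams i = ∑ i ∈ S, lams i + ∑ i ∈ Sᶜ, lams i := (Finset.sum_add_sum_compl S _).symm
    rw [this]
    have h1 : ∑ i ∈ S, lams i = 0 := by
      apply Finset.sum_eq_zero
      intro i hi
      have hli : lam i = τ * C := hcs1 i (Finset.mem_filter.mp hi).2
      have := hcomp i
      rw [hli] at this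
      rcases mul_eq_zero.mp this with h | h
      · exact absurd h (ne_of_gt (by nlinarith))
      · exact h
    rw [h1, zero_add]
    calc ∑ i ∈ Sᶜ, lams i ≤ ∑ _i ∈ Sᶜ, (1 - τ) * C := Finset.sum_le_sum (fun i _ => (hlams i).2)
    _ = (Sᶜ.card : ℝ) * ((1 - τ) * C) := by rw [Finset.sum_const, nsmul_eq_mul]
    _ = ((n : ℝ) - S.card) * ((1 - τ) * C) := by
        rw [Finset.card_compl, Fintype.card_fin]
        congr 1
        have := Finset.card_le_univ S
        rw [Fintype.card_fin] at this
        push_cast [Nat.cast_sub this]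
        ring_nf
  have hup2 : ∑ i, lam i ≤ ((n : ℝ) - T.card) * (τ * C) := by
    have : ∑ i, lam i = ∑ i ∈ T, lam i + ∑ i ∈ Tᶜ, lam i := (Finset.sum_add_sum_compl T _).symm
    rw [this]
    have h1 : ∑ i ∈ T, lam i = 0 := by
      apply Finset.sum_eq_zero
      intro i hi
      have hli : lams i = (1 - τ) * C := hcs2 i (Finset.mem_filter.mp hi).2
      have := hcomp i
      rw [hli] at this
      rcases mul_eq_zero.mp this with h | h
      · exact h
      · exact absurd h (ne_of_gt (by nlinarith))
    rw [h1, zero_add]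
    calc ∑ i ∈ Tᶜ, lam i ≤ ∑ _i ∈ Tᶜ, τ * C := Finset.sum_le_sum (fun i _ => (hlam i).2)
    _ = (Tᶜ.card : ℝ) * (τ * C) := by rw [Finset.sum_const, nsmul_eq_mul]
    _ = ((n : ℝ) - T.card) * (τ * C) := by
        rw [Finset.card_compl, Fintype.card_fin]
        congr 1
        have := Finset.card_le_univ T
        rw [Fintype.card_fin] at this
        push_cast [Nat.cast_sub this]
        ring_nf
  have hnpos : (0 : ℝ) < n := by exact_mod_cast hn
  constructor
  · -- T.card / n ≤ τ : from T.card * (1-τ)C ≤ Σλs = Σλ ≤ (n - T.card) * τC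
    rw [div_le_iff₀ hnpos]
    have key : (T.card : ℝ) * ((1 - τ) * C) ≤ ((n : ℝ) - T.card) * (τ * C) := by
      calc (T.card : ℝ) * ((1 - τ) * C) ≤ ∑ i, lams i := hlow2
      _ = ∑ i, lam i := hsum.symm
      _ ≤ ((n : ℝ) - T.card) * (τ * C) := hup2
    nlinarith [hC]
  · rw [div_le_iff₀ hnpos]
    have key : (S.card : ℝ) * (τ * C) ≤ ((n : ℝ) - S.card) * ((1 - τ) * C) := by
      calc (S.card : ℝ) * (τ * C) ≤ ∑ i, lam i := hlow1
      _ = ∑ i, lams i := hsum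
      _ ≤ ((n : ℝ) - S.card) * ((1 - τ) * C) := hup1
    nlinarith [hC]
end

section
/- Abstract quantile counting lemma: let λ, λ* ∈ ℝ^n with 0 ≤ λ_i ≤ τC, 0 ≤ λ*_i ≤ (1−τ)C, λ_i λ*_i = 0 for all i, and Σ_i λ_i = Σ_i λ*_i. If n₊ = #{i : λ_i = τC} and n₋ = #{i : λ*_i = (1−τ)C} (with τC > 0 and (1−τ)C > 0), then n₊ ≤ (1−τ)n and n₋ ≤ τn. -/
lemma aux_quantile (n : ℕ) (a b : ℝ) (ha : 0 < a) (hb : 0 ≤ b)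
    (f g : Fin n → ℝ)
    (hf : ∀ i, 0 ≤ f i ∧ f i ≤ a) (hg : ∀ i, 0 ≤ g i ∧ g i ≤ b)
    (hcomp : ∀ i, f i * g i = 0)
    (hbal : ∑ i, f i ≤ ∑ i, g i) :
    ((Finset.univ.filter (fun i : Fin n => f i = a)).card : ℝ) * a ≤
      ((n : ℝ) - (Finset.univ.filter (fun i : Fin n => f i = a)).card) * b := by
  set A := Finset.univ.filter (fun i : Fin n => f i = a) with hA
  have h1 : (A.card : ℝ) * a ≤ ∑ i, f i := by
    have : (A.card : ℝ) * a = ∑ i ∈ A, f i := by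
      rw [Finset.sum_congr rfl (fun i hi => (Finset.mem_filter.mp hi).2)]
      simp [mul_comm, hA]
    rw [this]
    exact Finset.sum_le_sum_of_subset_of_nonneg (Finset.subset_univ A)
      (fun i _ _ => (hf i).1)
  have h2 : ∑ i, g i ≤ ∑ i : Fin n, (if f i = a then 0 else b) := by
    apply Finset.sum_le_sum
    intro i _
    by_cases h : f i = a
    · simp only [h, if_true]
      have := hcomp i
      rw [h] at this
      have : g i = 0 := by
        rcases mul_eq_zero.mp this with h' | h'
        · exact absurd h' (ne_of_gt ha)
        · exact h'
      simp [this]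
    · simp only [h, if_false]
      exact (hg i).2
  have h3 : ∑ i : Fin n, (if f i = a then 0 else b) = ((n : ℝ) - A.card) * b := by
    rw [Finset.sum_ite, Finset.sum_const, Finset.sum_const]
    simp only [smul_eq_mul, mul_zero, zero_add, smul_zero]
    have : (Finset.univ.filter (fun i : Fin n => ¬ f i = a)).card = n - A.card := by
      rw [Finset.filter_not, Finset.card_sdiff_of_subset (Finset.filter_subset _ _), Finset.card_univ, Fintype.card_fin]
    rw [this]
    have hle : A.card ≤ n := by
      simpa using Finset.card_le_card (Finset.subset_univ A)
    rw [nsmul_eq_mul, Nat.cast_sub hle]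
  linarith

theorem abstract_quantile_counting
    (n : ℕ) (hn : 1 ≤ n) (τ C : ℝ) (hτ : τ ∈ Set.Ioo (0:ℝ) 1) (hC : 0 < C)
    (lam lams : Fin n → ℝ)
    (hlam : ∀ i, 0 ≤ lam i ∧ lam i ≤ τ * C)
    (hlams : ∀ i, 0 ≤ lams i ∧ lams i ≤ (1 - τ) * C)
    (hcomp : ∀ i, lam i * lams i = 0)
    (hbal : ∑ i, lam i = ∑ i, lams i) :
    ((Finset.univ.filter (fun i : Fin n => lam i = τ * C)).card : ℝ) ≤ (1 - τ) * n ∧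
    ((Finset.univ.filter (fun i : Fin n => lams i = (1 - τ) * C)).card : ℝ) ≤ τ * n := by
  obtain ⟨hτ0, hτ1⟩ := hτ
  have ha : 0 < τ * C := by positivity
  have hb : 0 < (1 - τ) * C := by
    apply mul_pos (by linarith) hC
  constructor
  · have := aux_quantile n (τ * C) ((1 - τ) * C) ha hb.le lam lams hlam hlams hcomp hbal.le
    nlinarith [this]
  · have hcomp' : ∀ i, lams i * lam i = 0 := fun i => by rw [mul_comm]; exact hcomp i
    have := aux_quantile n ((1 - τ) * C) (τ * C) hb ha.le lams lam hlams hlam hcomp' hbal.ge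
    nlinarith [this]
end
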